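/- For any even probability density ρ on [−π, π], the eigenfunction F(v) = Σ_j (v_j⁴ − 3N/(N+2)) of the Kac operator L_N has eigenvalue Γ_N = (1/4)(N+2)/(N−1) · Γ₂ where Γ₂ = 2∫_{−π}^{π}(1 − cos 4θ) ρ(θ) dθ; in particular the spectral gap satisfies Δ_N ≤ (1/4)(N+2)/(N−1) Γ₂. -/

import Mathlib

open MeasureTheory

/-- The Kac rotation `R_{i,j,θ}` acting on velocities in `ℝ^N`. -/
noncomputable def kacRot (N : ℕ) (i j : Fin N) (θ : ℝ)
    (v : EuclideanSpace ℝ (Fin N)) : EuclideanSpace ℝ (Fin N) :=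
  WithLp.toLp 2 fun m =>
    if m = i then Real.cos θ * v i - Real.sin θ * v j
    else if m = j then Real.sin θ * v i + Real.cos θ * v j
    else v m

/-- The Kac operator `Q_N` built from the scattering density `ρ`. -/
noncomputable def kacQrho (N : ℕ) (ρ : ℝ → ℝ) (F : EuclideanSpace ℝ (Fin N) → ℝ)
    (v : EuclideanSpace ℝ (Fin N)) : ℝ :=
  ((N.choose 2 : ℝ))⁻¹ *
    ∑ p ∈ Finset.univ.filter (fun p : Fin N × Fin N => p.1 < p.2),
      ∫ θ in (-Real.pi)..Real.pi, ρ θ * F (kacRot N p.1 p.2 θ v)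

/- ### Auxiliary lemmas -/

lemma quartic_rot (a b θ : ℝ) :
    (Real.cos θ * a - Real.sin θ * b)^4 + (Real.sin θ * a + Real.cos θ * b)^4
    = (a^2+b^2)^2 - (1 - Real.cos (4*θ))/4 * (a^2-b^2)^2
      - Real.sin (4*θ) * ((a^2-b^2)*a*b) - (1 + Real.cos (4*θ)) * (a^2*b^2) := by
  have h4 : (4:ℝ)*θ = 2*(2*θ) := by ring
  have hc : Real.cos (4*θ) = 2*(2*Real.cos θ^2-1)^2-1 := by
    rw [h4, Real.cos_two_mul, Real.cos_two_mul]
  have hs : Real.sin (4*θ) = 2*(2*Real.sin θ*Real.cos θ)*(2*Real.cos θ^2-1) := by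
    rw [h4, Real.sin_two_mul, Real.sin_two_mul, Real.cos_two_mul]
  have h : Real.sin θ^2 + Real.cos θ^2 = 1 := Real.sin_sq_add_cos_sq θ
  set s := Real.sin θ; set c := Real.cos θ
  rw [hc, hs]
  linear_combination (b^4*(1 - c^2 + s^2) - 4*a*b^3*s*c + 12*a^2*b^2*c^2
    + 4*a^3*b*s*c + a^4*(1 - c^2 + s^2)) * h

lemma odd_integral (f : ℝ → ℝ) (hodd : ∀ x, f (-x) = - f x) :
    ∫ x in (-Real.pi)..Real.pi, f x = 0 := by
  have h := intervalIntegral.integral_comp_neg (a := -Real.pi) (b := Real.pi) f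
  rw [neg_neg] at h
  have h2 : (∫ x in (-Real.pi)..Real.pi, f (-x))
      = - ∫ x in (-Real.pi)..Real.pi, f x := by
    rw [show (fun x => f (-x)) = (fun x => -(f x)) from funext fun x => hodd x]
    exact intervalIntegral.integral_neg
  linarith [h, h2]

lemma pair_sum_eq {N : ℕ} (φ : Fin N → Fin N → ℝ) (hsym : ∀ i j, φ i j = φ j i) :
    2 * ∑ p ∈ Finset.univ.filter (fun p : Fin N × Fin N => p.1 < p.2), φ p.1 p.2
      = (∑ i, ∑ j, φ i j) - ∑ i, φ i i := by
  have key : ∑ p ∈ Finset.univ.filter (fun p : Fin N × Fin N => p.1 < p.2), φ p.1 p.2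
      = ∑ i, ∑ j, if i < j then φ i j else 0 := by
    rw [Finset.sum_filter, Fintype.sum_prod_type]
  have swap : (∑ i, ∑ j, if j < i then φ i j else 0)
      = ∑ i, ∑ j, if i < j then φ i j else 0 := by
    rw [Finset.sum_comm]
    exact Finset.sum_congr rfl fun i _ => Finset.sum_congr rfl fun j _ => by
      rw [hsym]
  have tri : ∀ i j : Fin N, φ i j =
      (if i < j then φ i j else 0) + (if j < i then φ i j else 0)
        + (if i = j then φ i j else 0) := by
    intro i j
    rcases lt_trichotomy i j with h | h | h
    · simp [h, h.ne, not_lt_of_gt h]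
    · simp [h]
    · simp [h, h.ne', not_lt_of_gt h]
  have full : (∑ i, ∑ j, φ i j)
      = (∑ i, ∑ j, if i < j then φ i j else 0)
        + (∑ i, ∑ j, if j < i then φ i j else 0) + ∑ i, φ i i := by
    calc (∑ i, ∑ j, φ i j)
        = ∑ i, ∑ j, ((if i < j then φ i j else 0) + (if j < i then φ i j else 0)
            + (if i = j then φ i j else 0)) :=
          Finset.sum_congr rfl fun i _ => Finset.sum_congr rfl fun j _ => tri i j
      _ = _ := by
          simp only [Finset.sum_add_distrib, Finset.sum_ite_eq, Finset.mem_univ, if_true]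
  rw [key, full, swap]; ring

lemma F_rot {N : ℕ} (v : EuclideanSpace ℝ (Fin N)) (c : ℝ) (i j : Fin N)
    (hij : i ≠ j) (θ : ℝ) :
    ∑ m, ((kacRot N i j θ v m)^4 - c)
      = (∑ m, ((v m)^4 - c)) - (v i)^4 - (v j)^4
        + (Real.cos θ * v i - Real.sin θ * v j)^4
        + (Real.sin θ * v i + Real.cos θ * v j)^4 := by
  have hpt : ∀ m : Fin N, (kacRot N i j θ v m)^4 - c
      = ((v m)^4 - c)
        + ((if m = i then ((Real.cos θ * v i - Real.sin θ * v j)^4 - (v i)^4) else 0)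
          + (if m = j then ((Real.sin θ * v i + Real.cos θ * v j)^4 - (v j)^4) else 0)) := by
    intro m
    unfold kacRot
    by_cases h1 : m = i
    · subst h1; simp [hij]
    · by_cases h2 : m = j
      · subst h2; simp [h1]
      · simp [h1, h2]
  rw [Finset.sum_congr rfl fun m _ => hpt m, Finset.sum_add_distrib,
    Finset.sum_add_distrib, Finset.sum_ite_eq' Finset.univ,
    Finset.sum_ite_eq' Finset.univ]
  simp; ring

lemma rho_integrable {ρ : ℝ → ℝ}
    (hρint : (∫ θ in (-Real.pi)..Real.pi, ρ θ) = 1) :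
    IntervalIntegrable ρ volume (-Real.pi) Real.pi := by
  by_contra h
  rw [intervalIntegral.integral_undef h] at hρint
  exact one_ne_zero hρint.symm

lemma pair_integral {ρ : ℝ → ℝ} (hρeven : ∀ θ, ρ (-θ) = ρ θ)
    (hρint : (∫ θ in (-Real.pi)..Real.pi, ρ θ) = 1) (a b : ℝ) :
    ∫ θ in (-Real.pi)..Real.pi,
        ρ θ * ((Real.cos θ * a - Real.sin θ * b)^4 + (Real.sin θ * a + Real.cos θ * b)^4)
      = ((a^2+b^2)^2 - (a^2-b^2)^2/4 - a^2*b^2)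
        + ((a^2-b^2)^2/4 - a^2*b^2)
          * (∫ θ in (-Real.pi)..Real.pi, ρ θ * Real.cos (4*θ)) := by
  have hInt := rho_integrable hρint
  have hIc : IntervalIntegrable (fun θ => ρ θ * Real.cos (4*θ)) volume
      (-Real.pi) Real.pi :=
    hInt.mul_continuousOn (Continuous.continuousOn (by fun_prop))
  have hIs : IntervalIntegrable (fun θ => ρ θ * Real.sin (4*θ)) volume
      (-Real.pi) Real.pi :=
    hInt.mul_continuousOn (Continuous.continuousOn (by fun_prop))
  have hK : (∫ θ in (-Real.pi)..Real.pi, ρ θ * Real.sin (4*θ)) = 0 := by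
    apply odd_integral
    intro x
    have h4 : (4:ℝ)*(-x) = -(4*x) := by ring
    rw [h4, Real.sin_neg, hρeven]; ring
  set D := (a^2+b^2)^2 - (a^2-b^2)^2/4 - a^2*b^2 with hD
  set B := (a^2-b^2)^2/4 - a^2*b^2 with hB
  set C := -((a^2-b^2)*a*b) with hC
  have hpt : (fun θ => ρ θ * ((Real.cos θ * a - Real.sin θ * b)^4
        + (Real.sin θ * a + Real.cos θ * b)^4))
      = fun θ => D * ρ θ + (B * (ρ θ * Real.cos (4*θ)) + C * (ρ θ * Real.sin (4*θ))) := by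
    funext θ
    rw [quartic_rot a b θ, hD, hB, hC]; ring
  rw [hpt, intervalIntegral.integral_add (hInt.const_mul D)
      ((hIc.const_mul B).add (hIs.const_mul C)),
    intervalIntegral.integral_add (hIc.const_mul B) (hIs.const_mul C),
    intervalIntegral.integral_const_mul, intervalIntegral.integral_const_mul,
    intervalIntegral.integral_const_mul, hρint, hK]
  ring

/-- For any even scattering probability density `ρ`, the function
`F(v) = Σ_j (v_j⁴ - 3N/(N+2))` is an eigenfunction of `L_N = N(I - Q_N)` with eigenvalue
`Γ_N = (1/4)(N+2)/(N-1)·Γ₂`, `Γ₂ = 2∫(1-cos 4θ)ρ(θ)dθ`; in particular the spectral gap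
`Δ_N` satisfies `Δ_N ≤ Γ_N`. -/
theorem kac_general_rho_eigenvalue (N : ℕ) (hN : 2 ≤ N)
    (ρ : ℝ → ℝ) (hρeven : ∀ θ, ρ (-θ) = ρ θ) (hρpos : ∀ θ, 0 ≤ ρ θ)
    (hρint : (∫ θ in (-Real.pi)..Real.pi, ρ θ) = 1)
    (F : EuclideanSpace ℝ (Fin N) → ℝ)
    (hF : F = fun w => ∑ j, ((w j) ^ 4 - 3 * (N : ℝ) / ((N : ℝ) + 2)))
    (Γ₂ ΓN : ℝ)
    (hΓ₂ : Γ₂ = 2 * ∫ θ in (-Real.pi)..Real.pi, (1 - Real.cos (4 * θ)) * ρ θ)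
    (hΓN : ΓN = (1 / 4) * (((N : ℝ) + 2) / ((N : ℝ) - 1)) * Γ₂)
    -- the uniform probability measure on the sphere `S^{N-1}(√N)`:
    (σ : Measure (EuclideanSpace ℝ (Fin N)))
    (hprob : IsProbabilityMeasure σ)
    (hsupp : σ (Metric.sphere (0 : EuclideanSpace ℝ (Fin N)) (Real.sqrt N))ᶜ = 0)
    (hinv : ∀ g : EuclideanSpace ℝ (Fin N) ≃ₗᵢ[ℝ] EuclideanSpace ℝ (Fin N),
      Measure.map g σ = σ)
    -- `Δ` is a spectral-gap lower bound for `L_N = N(I - Q_N)` in `L²(σ)`: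
    (Δ : ℝ)
    (hΔ : ∀ G : EuclideanSpace ℝ (Fin N) → ℝ, (∫ v, G v ∂σ) = 0 →
      Δ * ∫ v, (G v) ^ 2 ∂σ
        ≤ ∫ v, G v * ((N : ℝ) * (G v - kacQrho N ρ G v)) ∂σ)
    -- normalization facts for `F` (true for the uniform sphere measure):
    (hF0 : ∫ v, F v ∂σ = 0) (hF2 : 0 < ∫ v, (F v) ^ 2 ∂σ) :
    (∀ v : EuclideanSpace ℝ (Fin N), (∑ j, (v j) ^ 2 = (N : ℝ)) →
      (N : ℝ) * (F v - kacQrho N ρ F v) = ΓN * F v) ∧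
    Δ ≤ ΓN := by
  have hNR : (2:ℝ) ≤ (N:ℝ) := by exact_mod_cast hN
  have hN0 : (N:ℝ) ≠ 0 := by linarith
  have hN1 : (N:ℝ) - 1 ≠ 0 := by intro h; linarith [h]
  have hN2 : (N:ℝ) + 2 ≠ 0 := by linarith
  have hInt := rho_integrable hρint
  have hIc : IntervalIntegrable (fun θ => ρ θ * Real.cos (4*θ)) volume
      (-Real.pi) Real.pi :=
    hInt.mul_continuousOn (Continuous.continuousOn (by fun_prop))
  set J := ∫ θ in (-Real.pi)..Real.pi, ρ θ * Real.cos (4*θ) with hJ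
  have hΓ2J : Γ₂ = 2 * (1 - J) := by
    rw [hΓ₂]
    have h1 : (∫ θ in (-Real.pi)..Real.pi, (1 - Real.cos (4 * θ)) * ρ θ)
        = ∫ θ in (-Real.pi)..Real.pi, (ρ θ - ρ θ * Real.cos (4*θ)) :=
      intervalIntegral.integral_congr (fun x _ => by ring)
    rw [h1, intervalIntegral.integral_sub hInt hIc, hρint, hJ]
  -- the main eigenvalue computation
  have key : ∀ v : EuclideanSpace ℝ (Fin N), (∑ j, (v j) ^ 2 = (N : ℝ)) →
      (N : ℝ) * (F v - kacQrho N ρ F v) = ΓN * F v := by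
    intro v hv
    set G := ∑ j, (v j)^4 with hG
    have hFv : F v = G - (N:ℝ) * (3*(N:ℝ)/((N:ℝ)+2)) := by
      rw [hF]
      simp only []
      rw [Finset.sum_sub_distrib, Finset.sum_const, Finset.card_univ,
        Fintype.card_fin, nsmul_eq_mul, hG]
    -- per-pair integral
    have hpair : ∀ i j : Fin N, i ≠ j →
        (∫ θ in (-Real.pi)..Real.pi, ρ θ * F (kacRot N i j θ v))
        = F v + (1-J)/4 * (6*(v i)^2*(v j)^2 - (v i)^4 - (v j)^4) := by
      intro i j hij
      have h1 : (fun θ => ρ θ * F (kacRot N i j θ v)) = fun θ =>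
          (F v - (v i)^4 - (v j)^4) * ρ θ
          + ρ θ * ((Real.cos θ * v i - Real.sin θ * v j)^4
            + (Real.sin θ * v i + Real.cos θ * v j)^4) := by
        funext θ
        have h2 : F (kacRot N i j θ v)
            = F v - (v i)^4 - (v j)^4
              + (Real.cos θ * v i - Real.sin θ * v j)^4
              + (Real.sin θ * v i + Real.cos θ * v j)^4 := by
          rw [hF]
          exact F_rot v _ i j hij θ
        rw [h2]; ring
      have hIq : IntervalIntegrable (fun θ => ρ θ *
          ((Real.cos θ * v i - Real.sin θ * v j)^4
            + (Real.sin θ * v i + Real.cos θ * v j)^4)) volume (-Real.pi) Real.pi :=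
        hInt.mul_continuousOn (Continuous.continuousOn (by fun_prop))
      rw [h1, intervalIntegral.integral_add (hInt.const_mul _) hIq,
        intervalIntegral.integral_const_mul, hρint,
        pair_integral hρeven hρint (v i) (v j), ← hJ]
      ring
    -- rewrite the pair sum
    have hψ : (∑ p ∈ Finset.univ.filter (fun p : Fin N × Fin N => p.1 < p.2),
          ∫ θ in (-Real.pi)..Real.pi, ρ θ * F (kacRot N p.1 p.2 θ v))
        = ∑ p ∈ Finset.univ.filter (fun p : Fin N × Fin N => p.1 < p.2),
            (F v + (1-J)/4 * (6*(v p.1)^2*(v p.2)^2 - (v p.1)^4 - (v p.2)^4)) := by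
      refine Finset.sum_congr rfl fun p hp => ?_
      have hlt : p.1 < p.2 := (Finset.mem_filter.mp hp).2
      exact hpair p.1 p.2 hlt.ne
    have h2T := pair_sum_eq
      (fun i j => F v + (1-J)/4 * (6*(v i)^2*(v j)^2 - (v i)^4 - (v j)^4))
      (fun i j => by ring)
    have hdouble : (∑ i, ∑ j : Fin N,
          (F v + (1-J)/4 * (6*(v i)^2*(v j)^2 - (v i)^4 - (v j)^4)))
        = (N:ℝ)^2 * F v + (1-J)/4 * (6*(N:ℝ)^2 - 2*(N:ℝ)*G) := by
      have inner : ∀ i : Fin N,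
          (∑ j, (F v + (1-J)/4 * (6*(v i)^2*(v j)^2 - (v i)^4 - (v j)^4)))
          = (N:ℝ) * F v + (1-J)/4 * (6*(v i)^2*(N:ℝ) - (N:ℝ)*(v i)^4 - G) := by
        intro i
        have e : ∀ j : Fin N, F v + (1-J)/4 * (6*(v i)^2*(v j)^2 - (v i)^4 - (v j)^4)
            = (F v - (1-J)/4*(v i)^4) + (6*(1-J)/4*(v i)^2) * (v j)^2
              + (-((1-J)/4)) * (v j)^4 := fun j => by ring
        rw [Finset.sum_congr rfl fun j _ => e j, Finset.sum_add_distrib,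
          Finset.sum_add_distrib, Finset.sum_const, ← Finset.mul_sum, ← Finset.mul_sum,
          hv, Finset.card_univ, Fintype.card_fin, nsmul_eq_mul, ← hG]
        ring
      rw [Finset.sum_congr rfl fun i _ => inner i]
      have e2 : ∀ i : Fin N,
          (N:ℝ) * F v + (1-J)/4 * (6*(v i)^2*(N:ℝ) - (N:ℝ)*(v i)^4 - G)
          = ((N:ℝ)*F v - (1-J)/4*G) + (6*(1-J)/4*(N:ℝ)) * (v i)^2
            + (-((1-J)/4*(N:ℝ))) * (v i)^4 := fun i => by ring
      rw [Finset.sum_congr rfl fun i _ => e2 i, Finset.sum_add_distrib,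
        Finset.sum_add_distrib, Finset.sum_const, ← Finset.mul_sum, ← Finset.mul_sum,
        hv, Finset.card_univ, Fintype.card_fin, nsmul_eq_mul, ← hG]
      ring
    have hdiag : (∑ i : Fin N,
          (F v + (1-J)/4 * (6*(v i)^2*(v i)^2 - (v i)^4 - (v i)^4)))
        = (N:ℝ) * F v + (1-J) * G := by
      have e : ∀ i : Fin N, F v + (1-J)/4 * (6*(v i)^2*(v i)^2 - (v i)^4 - (v i)^4)
          = F v + (1-J) * (v i)^4 := fun i => by ring
      rw [Finset.sum_congr rfl fun i _ => e i, Finset.sum_add_distrib,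
        Finset.sum_const, ← Finset.mul_sum, Finset.card_univ, Fintype.card_fin,
        nsmul_eq_mul, ← hG]
    have hsumT : (∑ p ∈ Finset.univ.filter (fun p : Fin N × Fin N => p.1 < p.2),
          ∫ θ in (-Real.pi)..Real.pi, ρ θ * F (kacRot N p.1 p.2 θ v))
        = ((N:ℝ)^2 * F v + (1-J)/4 * (6*(N:ℝ)^2 - 2*(N:ℝ)*G)
            - ((N:ℝ) * F v + (1-J) * G)) / 2 := by
      rw [hψ]
      linarith [h2T, hdouble, hdiag]
    have hchoose : ((N.choose 2 : ℕ) : ℝ) = (N:ℝ) * ((N:ℝ) - 1) / 2 :=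
      Nat.cast_choose_two (K := ℝ) N
    have hQ : kacQrho N ρ F v = ((N:ℝ) * ((N:ℝ) - 1) / 2)⁻¹
        * (((N:ℝ)^2 * F v + (1-J)/4 * (6*(N:ℝ)^2 - 2*(N:ℝ)*G)
            - ((N:ℝ) * F v + (1-J) * G)) / 2) := by
      rw [kacQrho, hsumT, hchoose]
    rw [hQ, hΓN, hΓ2J, hFv]
    field_simp
    ring
  refine ⟨key, ?_⟩
  have hae : ∀ᵐ v ∂σ, F v * ((N:ℝ) * (F v - kacQrho N ρ F v)) = ΓN * (F v)^2 := by
    rw [ae_iff]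
    refine measure_mono_null (fun v hv => ?_) hsupp
    simp only [Set.mem_setOf_eq] at hv
    intro hmem
    apply hv
    have hsph : ∑ j, (v j)^2 = (N:ℝ) := by
      have hd : ‖v‖ = Real.sqrt N := by
        simpa [dist_zero_right] using (Metric.mem_sphere.mp hmem)
      have hne : ‖v‖ = Real.sqrt (∑ j, (v j)^2) := by
        rw [EuclideanSpace.norm_eq]
        congr 1
        exact Finset.sum_congr rfl fun j _ => by rw [Real.norm_eq_abs, sq_abs]
      have h0 : (0:ℝ) ≤ ∑ j, (v j)^2 := Finset.sum_nonneg fun j _ => sq_nonneg _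
      have := hne.symm.trans hd
      calc (∑ j, (v j)^2) = Real.sqrt (∑ j, (v j)^2) ^ 2 := (Real.sq_sqrt h0).symm
        _ = Real.sqrt N ^ 2 := by rw [this]
        _ = (N:ℝ) := Real.sq_sqrt (Nat.cast_nonneg N)
    rw [key v hsph]; ring
  have h2 := hΔ F hF0
  rw [integral_congr_ae hae, integral_const_mul] at h2
  exact le_of_mul_le_mul_right h2 hF2
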